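/- For any positive integer n, the sum over k from 0 to n-1 of (4k+3)*g_k(x) is a polynomial in x with integer coefficients all divisible by n; equivalently, (1/n) * sum_{k=0}^{n-1} (4k+3) g_k(x) lies in Z[x]. -/

import Mathlib

open Polynomial Finset
open scoped Nat

/-- The Sun polynomials `g_n(x) = ∑_{k=0}^n C(n,k)^2 C(2k,k) x^k` in `ℤ[x]`. -/
noncomputable def sunPoly (n : ℕ) : Polynomial ℤ :=
  ∑ k ∈ Finset.range (n + 1),
    Polynomial.C ((n.choose k : ℤ) ^ 2 * ((2 * k).choose k : ℤ)) * Polynomial.X ^ k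

/-- Binomial-basis coefficients of `(4k+3) C(k,j)^2`. -/
def sunAuxE (j m : ℕ) : ℕ :=
  (4 * m + 3) * (m.choose j * j.choose (m - j)) +
    4 * m * ((m - 1).choose j * j.choose (m - j - 1))

lemma sunPoly_coeff (k j : ℕ) :
    (sunPoly k).coeff j = (k.choose j : ℤ) ^ 2 * ((2 * j).choose j : ℤ) := by
  unfold sunPoly
  rw [Polynomial.finset_sum_coeff]
  simp only [Polynomial.coeff_C_mul, Polynomial.coeff_X_pow, mul_ite, mul_one, mul_zero]
  rw [Finset.sum_ite_eq (Finset.range (k + 1)) j]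
  by_cases h : j ≤ k
  · simp [Finset.mem_range, Nat.lt_succ_iff, h]
  · push_neg at h
    rw [if_neg (by simp [Finset.mem_range]; omega), Nat.choose_eq_zero_of_lt h]
    simp

/-- Subset-of-subset identity. -/
lemma choose_sub3 (n K i : ℕ) (h : i ≤ K) :
    n.choose K * K.choose i = n.choose i * (n - i).choose (K - i) := by
  rcases le_or_gt K n with hK | hK
  · have h1 : K.choose i * i ! * (K - i)! = K ! :=
      Nat.choose_mul_factorial_mul_factorial h
    have h2 : n.choose K * K ! * (n - K)! = n ! :=
      Nat.choose_mul_factorial_mul_factorial hK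
    have h3 : n.choose i * i ! * (n - i)! = n ! :=
      Nat.choose_mul_factorial_mul_factorial (le_trans h hK)
    have h4 : (n - i).choose (K - i) * (K - i)! * (n - K)! = (n - i)! := by
      have := Nat.choose_mul_factorial_mul_factorial (show K - i ≤ n - i by omega)
      rwa [show n - i - (K - i) = n - K by omega] at this
    apply Nat.eq_of_mul_eq_mul_right
      (show 0 < i ! * ((K - i)! * (n - K)!) by positivity)
    calc n.choose K * K.choose i * (i ! * ((K - i)! * (n - K)!))
        = K.choose i * i ! * (K - i)! * n.choose K * (n - K)! := by ring
      _ = K ! * n.choose K * (n - K)! := by rw [h1]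
      _ = n ! := by rw [← h2]; ring
      _ = n.choose i * i ! * (n - i)! := h3.symm
      _ = n.choose i * i ! * ((n - i).choose (K - i) * (K - i)! * (n - K)!) := by rw [h4]
      _ = n.choose i * (n - i).choose (K - i) * (i ! * ((K - i)! * (n - K)!)) := by ring
  · rw [Nat.choose_eq_zero_of_lt hK, Nat.zero_mul]
    rcases le_or_gt i n with hi | hi
    · rw [Nat.choose_eq_zero_of_lt (show n - i < K - i by omega), Nat.mul_zero]
    · rw [Nat.choose_eq_zero_of_lt hi, Nat.zero_mul]

/-- A form of Vandermonde's identity. -/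
lemma vand_sq (j t : ℕ) :
    ∑ i ∈ Finset.range (j + 1), j.choose i * t.choose i = (t + j).choose j := by
  rw [Nat.add_choose_eq, Finset.Nat.sum_antidiagonal_eq_sum_range_succ_mk]
  apply Finset.sum_congr rfl
  intro i hi
  rw [Finset.mem_range] at hi
  show j.choose i * t.choose i = t.choose i * j.choose (j - i)
  rw [Nat.choose_symm (by omega : i ≤ j), mul_comm]

lemma lemQ (k j : ℕ) :
    ∑ m ∈ Finset.range (2 * j + 1), m.choose j * j.choose (m - j) * k.choose m
      = k.choose j ^ 2 := by
  have hsplit : ∑ m ∈ Finset.range (2 * j + 1),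
      m.choose j * j.choose (m - j) * k.choose m
      = ∑ m ∈ Finset.Ico j (2 * j + 1), m.choose j * j.choose (m - j) * k.choose m := by
    rw [Finset.range_eq_Ico,
      ← Finset.sum_Ico_consecutive _ (Nat.zero_le j) (by omega : j ≤ 2 * j + 1)]
    have : ∑ m ∈ Finset.Ico 0 j, m.choose j * j.choose (m - j) * k.choose m = 0 := by
      apply Finset.sum_eq_zero
      intro m hm
      rw [Finset.mem_Ico] at hm
      rw [Nat.choose_eq_zero_of_lt hm.2, Nat.zero_mul, Nat.zero_mul]
    rw [this, zero_add]
  rw [hsplit, Finset.sum_Ico_eq_sum_range, show 2 * j + 1 - j = j + 1 by omega]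
  have hterm : ∀ i, (j + i).choose j * j.choose (j + i - j) * k.choose (j + i)
      = k.choose j * (j.choose i * (k - j).choose i) := by
    intro i
    rw [Nat.add_sub_cancel_left]
    have h := choose_sub3 k (j + i) j (by omega)
    rw [Nat.add_sub_cancel_left] at h
    calc (j + i).choose j * j.choose i * k.choose (j + i)
        = (k.choose (j + i) * (j + i).choose j) * j.choose i := by ring
      _ = (k.choose j * (k - j).choose i) * j.choose i := by rw [h]
      _ = k.choose j * (j.choose i * (k - j).choose i) := by ring
  rw [Finset.sum_congr rfl fun i _ => hterm i, ← Finset.mul_sum, vand_sq]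
  by_cases hk : j ≤ k
  · rw [show k - j + j = k by omega, pow_two]
  · rw [Nat.choose_eq_zero_of_lt (by omega), Nat.zero_mul, pow_two, Nat.zero_mul]

lemma lemA (k m : ℕ) :
    (4 * m + 3) * k.choose m + 4 * (m + 1) * k.choose (m + 1)
      = (4 * k + 3) * k.choose m := by
  rcases le_or_gt m k with h | h
  · have hc := Nat.choose_succ_right_eq k m
    have h4 : 4 * ((m + 1) * k.choose (m + 1)) = 4 * ((k - m) * k.choose m) := by
      rw [mul_comm (m + 1), mul_comm (k - m), hc]
    calc (4 * m + 3) * k.choose m + 4 * (m + 1) * k.choose (m + 1)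
        = (4 * m + 3) * k.choose m + 4 * ((m + 1) * k.choose (m + 1)) := by ring
      _ = (4 * m + 3) * k.choose m + 4 * ((k - m) * k.choose m) := by rw [h4]
      _ = (4 * m + 3 + 4 * (k - m)) * k.choose m := by ring
      _ = (4 * k + 3) * k.choose m := by rw [show 4 * m + 3 + 4 * (k - m) = 4 * k + 3 by omega]
  · rw [Nat.choose_eq_zero_of_lt h, Nat.choose_eq_zero_of_lt (by omega)]
    simp

lemma pointP (k j : ℕ) :
    ∑ m ∈ Finset.range (2 * j + 2), sunAuxE j m * k.choose m
      = (4 * k + 3) * k.choose j ^ 2 := by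
  unfold sunAuxE
  have hsplit : ∀ m, ((4 * m + 3) * (m.choose j * j.choose (m - j)) +
      4 * m * ((m - 1).choose j * j.choose (m - j - 1))) * k.choose m
      = (4 * m + 3) * (m.choose j * j.choose (m - j)) * k.choose m +
        4 * m * ((m - 1).choose j * j.choose (m - j - 1)) * k.choose m := by
    intro m; ring
  rw [Finset.sum_congr rfl fun m _ => hsplit m, Finset.sum_add_distrib]
  -- first sum : drop the last term (it vanishes)
  have hS1 : ∑ m ∈ Finset.range (2 * j + 2),
      (4 * m + 3) * (m.choose j * j.choose (m - j)) * k.choose m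
      = ∑ m ∈ Finset.range (2 * j + 1),
        (4 * m + 3) * (m.choose j * j.choose (m - j)) * k.choose m := by
    rw [Finset.sum_range_succ]
    rw [show 2 * j + 1 - j = j + 1 by omega, Nat.choose_succ_self, Nat.mul_zero,
      Nat.mul_zero, Nat.zero_mul, add_zero]
  -- second sum : shift the index
  have hS2 : ∑ m ∈ Finset.range (2 * j + 2),
      4 * m * ((m - 1).choose j * j.choose (m - j - 1)) * k.choose m
      = ∑ m ∈ Finset.range (2 * j + 1),
        (m.choose j * j.choose (m - j)) * (4 * (m + 1) * k.choose (m + 1)) := by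
    rw [Finset.sum_range_succ' (fun m => 4 * m * ((m - 1).choose j * j.choose (m - j - 1))
      * k.choose m) (2 * j + 1)]
    simp only [Nat.mul_zero, Nat.zero_mul, add_zero]
    apply Finset.sum_congr rfl
    intro i _
    rcases le_or_gt j i with h | h
    · rw [Nat.add_sub_cancel, show i + 1 - j - 1 = i - j by omega]
      ring
    · rw [Nat.add_sub_cancel, Nat.choose_eq_zero_of_lt h]
      ring
  rw [hS1, hS2, ← Finset.sum_add_distrib]
  have hterm : ∀ m, (4 * m + 3) * (m.choose j * j.choose (m - j)) * k.choose m +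
      (m.choose j * j.choose (m - j)) * (4 * (m + 1) * k.choose (m + 1))
      = (4 * k + 3) * (m.choose j * j.choose (m - j) * k.choose m) := by
    intro m
    have hA := lemA k m
    calc (4 * m + 3) * (m.choose j * j.choose (m - j)) * k.choose m +
        (m.choose j * j.choose (m - j)) * (4 * (m + 1) * k.choose (m + 1))
        = (m.choose j * j.choose (m - j)) *
            ((4 * m + 3) * k.choose m + 4 * (m + 1) * k.choose (m + 1)) := by ring
      _ = (m.choose j * j.choose (m - j)) * ((4 * k + 3) * k.choose m) := by rw [hA]
      _ = (4 * k + 3) * (m.choose j * j.choose (m - j) * k.choose m) := by ring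
  rw [Finset.sum_congr rfl fun m _ => hterm m, ← Finset.mul_sum, lemQ]

lemma star (n j : ℕ) :
    ∑ k ∈ Finset.range n, (4 * k + 3) * k.choose j ^ 2
      = ∑ m ∈ Finset.range (2 * j + 2), sunAuxE j m * n.choose (m + 1) := by
  induction n with
  | zero => simp
  | succ n ih =>
    rw [Finset.sum_range_succ, ih, ← pointP n j, ← Finset.sum_add_distrib]
    apply Finset.sum_congr rfl
    intro m _
    rw [Nat.choose_succ_succ']
    ring

/-- The pure algebraic certificate. -/
lemma certX (j a p q r u v : ℤ)
    (h1 : (j + a) * q = (j - a + 1) * p)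
    (h2 : (j + a + 1) * r = (j - a) * q)
    (h3 : a * v = (j + a) * u) :
    (j + a + 1) ∣ q * v ^ 2 + 4 * p * u ^ 2 := by
  have e1' : a ^ 2 * (q * v ^ 2 + 4 * p * u ^ 2)
      = (j + a + 1) * (u ^ 2 * ((3 * a - j - 1) * p + 2 * j * q - r)) := by
    linear_combination q * (a * v + (j + a) * u) * h3 + u ^ 2 * h2
      - (j - a + 1) * u ^ 2 * h1
  have e2' : (a + 1) ^ 2 * (q * v ^ 2 + 4 * p * u ^ 2)
      = (j + a + 1) * ((7 - j + 3 * a) * p * u ^ 2 - 2 * p * u * v + 2 * j * q * u ^ 2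
          + q * v ^ 2 - r * u ^ 2 + 2 * r * u * v - r * v ^ 2) := by
    linear_combination ((3 - 2 * j) * u ^ 2 + (a - 2) * u * v) * h1
      + (u - v) ^ 2 * h2 + ((5 - a + j) * p * u + 4 * q * u + a * q * v) * h3
  refine ⟨(1 - 2 * a) * ((7 - j + 3 * a) * p * u ^ 2 - 2 * p * u * v + 2 * j * q * u ^ 2
      + q * v ^ 2 - r * u ^ 2 + 2 * r * u * v - r * v ^ 2)
      + (2 * a + 3) * (u ^ 2 * ((3 * a - j - 1) * p + 2 * j * q - r)), ?_⟩
  linear_combination (1 - 2 * a) * e2' + (2 * a + 3) * e1'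

lemma key (j m : ℕ) :
    ((m : ℤ) + 1) ∣ ((2 * j).choose j : ℤ) * (sunAuxE j m : ℤ) := by
  rcases lt_or_ge m j with hmj | hmj
  · -- small m : everything vanishes
    have h1 : m.choose j = 0 := Nat.choose_eq_zero_of_lt hmj
    have h2 : (m - 1).choose j = 0 := Nat.choose_eq_zero_of_lt (by omega)
    unfold sunAuxE
    rw [h1, h2]
    simp
  · obtain ⟨a, rfl⟩ : ∃ a, m = j + a := ⟨m - j, by omega⟩
    rcases Nat.eq_zero_or_pos a with rfl | hapos
    · -- a = 0 : Catalan case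
      simp only [Nat.add_zero]
      have hE0 : sunAuxE j j = 4 * j + 3 := by
        unfold sunAuxE
        have h2 : (j - 1).choose j = 0 ∨ j = 0 := by
          rcases j with _ | jj
          · right; rfl
          · left; exact Nat.choose_eq_zero_of_lt (by omega)
        rcases h2 with h2 | rfl
        · rw [Nat.choose_self, Nat.sub_self, Nat.choose_zero_right, h2]
          ring
        · rfl
      obtain ⟨c, hc⟩ := Nat.succ_dvd_centralBinom j
      have hcb : (2 * j).choose j = (j + 1) * c := hc
      refine ⟨(c : ℤ) * (4 * j + 3), ?_⟩
      rw [hE0]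
      push_cast [hcb]
      ring
    · rcases le_or_gt a j with haj | haj
      · -- main case : 1 ≤ a ≤ j
        set m := j + a with hmdef
        have hm1 : 1 ≤ m := by omega
        -- the three binomial relations
        have h1 : ((j : ℤ) + a) * ((2 * j).choose m : ℤ)
            = ((j : ℤ) - a + 1) * ((2 * j).choose (m - 1) : ℤ) := by
          have h := Nat.choose_succ_right_eq (2 * j) (m - 1)
          rw [show m - 1 + 1 = m by omega] at h
          have h' := congrArg (Nat.cast : ℕ → ℤ) h
          push_cast [Nat.cast_sub (show m - 1 ≤ 2 * j by omega),
            Nat.cast_sub (show 1 ≤ m by omega)] at h'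
          have hmc : ((m : ℕ) : ℤ) = (j : ℤ) + a := by push_cast [hmdef]; ring
          linear_combination h' - (((2 * j).choose m : ℤ) + ((2 * j).choose (m - 1) : ℤ)) * hmc
        have h2 : ((j : ℤ) + a + 1) * ((2 * j).choose (m + 1) : ℤ)
            = ((j : ℤ) - a) * ((2 * j).choose m : ℤ) := by
          have h := Nat.choose_succ_right_eq (2 * j) m
          have h' := congrArg (Nat.cast : ℕ → ℤ) h
          push_cast [Nat.cast_sub (show m ≤ 2 * j by omega)] at h'
          have hmc : ((m : ℕ) : ℤ) = (j : ℤ) + a := by push_cast [hmdef]; ring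
          linear_combination h' - (((2 * j).choose (m + 1) : ℤ) + ((2 * j).choose m : ℤ)) * hmc
        have h3 : (a : ℤ) * (m.choose a : ℤ) = ((j : ℤ) + a) * ((m - 1).choose (a - 1) : ℤ) := by
          have h := Nat.add_one_mul_choose_eq (m - 1) (a - 1)
          rw [show m - 1 + 1 = m by omega, show a - 1 + 1 = a by omega] at h
          have h' := congrArg (Nat.cast : ℕ → ℤ) h
          push_cast at h'
          have hmc : ((m : ℕ) : ℤ) = (j : ℤ) + a := by push_cast [hmdef]; ring
          linear_combination - h' + ((m - 1).choose (a - 1) : ℤ) * hmc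
        -- regrouping identities
        have g1 : ((2 * j).choose j : ℤ) * ((m.choose j : ℤ) * (j.choose a : ℤ))
            = ((2 * j).choose m : ℤ) * (m.choose a : ℤ) ^ 2 := by
          have e1 : m.choose j = m.choose a := Nat.choose_symm_of_eq_add hmdef
          have s1 := choose_sub3 (2 * j) j a haj
          have s2 := choose_sub3 (2 * j) m a (by omega)
          rw [show m - a = j by omega] at s2
          have s3 : (2 * j - a).choose (j - a) = (2 * j - a).choose j := by
            have := Nat.choose_symm (show j ≤ 2 * j - a by omega)
            rwa [show 2 * j - a - j = j - a by omega] at this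
          have key2 : (2 * j).choose j * j.choose a = (2 * j).choose m * m.choose a := by
            rw [s1, s3, ← s2]
          have h' := congrArg (Nat.cast : ℕ → ℤ) key2
          push_cast at h'
          rw [e1]
          linear_combination (m.choose a : ℤ) * h'
        have g2 : ((2 * j).choose j : ℤ) * (((m - 1).choose j : ℤ) * (j.choose (a - 1) : ℤ))
            = ((2 * j).choose (m - 1) : ℤ) * ((m - 1).choose (a - 1) : ℤ) ^ 2 := by
          have hm' : m - 1 = j + (a - 1) := by omega
          have e1 : (m - 1).choose j = (m - 1).choose (a - 1) :=
            Nat.choose_symm_of_eq_add hm'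
          have s1 := choose_sub3 (2 * j) j (a - 1) (by omega)
          have s2 := choose_sub3 (2 * j) (m - 1) (a - 1) (by omega)
          rw [show m - 1 - (a - 1) = j by omega] at s2
          have s3 : (2 * j - (a - 1)).choose (j - (a - 1)) = (2 * j - (a - 1)).choose j := by
            have := Nat.choose_symm (show j ≤ 2 * j - (a - 1) by omega)
            rwa [show 2 * j - (a - 1) - j = j - (a - 1) by omega] at this
          have key2 : (2 * j).choose j * j.choose (a - 1)
              = (2 * j).choose (m - 1) * (m - 1).choose (a - 1) := by
            rw [s1, s3, ← s2]
          have h' := congrArg (Nat.cast : ℕ → ℤ) key2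
          push_cast at h'
          rw [e1]
          linear_combination ((m - 1).choose (a - 1) : ℤ) * h'
        -- the divisibility certificate
        have hX := certX (j : ℤ) (a : ℤ)
          ((2 * j).choose (m - 1) : ℤ) ((2 * j).choose m : ℤ) ((2 * j).choose (m + 1) : ℤ)
          ((m - 1).choose (a - 1) : ℤ) (m.choose a : ℤ) h1 h2 h3
        -- rewrite the goal
        have hE : ((2 * j).choose j : ℤ) * (sunAuxE j m : ℤ)
            = (4 * (m : ℤ) + 3) * (((2 * j).choose m : ℤ) * (m.choose a : ℤ) ^ 2)
              + 4 * (m : ℤ) *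
                (((2 * j).choose (m - 1) : ℤ) * ((m - 1).choose (a - 1) : ℤ) ^ 2) := by
          unfold sunAuxE
          rw [show m - j = a by omega]
          push_cast
          linear_combination (4 * (m : ℤ) + 3) * g1 + 4 * (m : ℤ) * g2
        have hgoal : ((m : ℤ) + 1) = ((j : ℤ) + a + 1) := by push_cast [hmdef]; ring
        rw [hE, hgoal]
        have hsplit2 : (4 * (m : ℤ) + 3) * (((2 * j).choose m : ℤ) * (m.choose a : ℤ) ^ 2)
            + 4 * (m : ℤ) *
              (((2 * j).choose (m - 1) : ℤ) * ((m - 1).choose (a - 1) : ℤ) ^ 2)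
            = ((j : ℤ) + a + 1) * (4 * (((2 * j).choose m : ℤ) * (m.choose a : ℤ) ^ 2
                + ((2 * j).choose (m - 1) : ℤ) * ((m - 1).choose (a - 1) : ℤ) ^ 2))
              - (((2 * j).choose m : ℤ) * (m.choose a : ℤ) ^ 2
                + 4 * ((2 * j).choose (m - 1) : ℤ) * ((m - 1).choose (a - 1) : ℤ) ^ 2) := by
          have hmc : ((m : ℕ) : ℤ) = (j : ℤ) + a := by push_cast [hmdef]; ring
          rw [hmc]; ring
        rw [hsplit2]
        exact dvd_sub (Dvd.intro _ rfl) hX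
      · -- a > j
        rcases eq_or_lt_of_le (show j + 1 ≤ a by omega) with hae | hae
        · -- a = j + 1, i.e. m = 2j+1
          obtain rfl : a = j + 1 := hae.symm
          obtain ⟨c, hc⟩ := Nat.succ_dvd_centralBinom j
          have hcb : (2 * j).choose j = (j + 1) * c := hc
          have hE : sunAuxE j (j + (j + 1)) = 4 * (2 * j + 1) * ((2 * j).choose j) := by
            unfold sunAuxE
            rw [show j + (j + 1) - j = j + 1 by omega, Nat.choose_succ_self,
              show j + 1 - 1 = j by omega, Nat.choose_self,
              show j + (j + 1) - 1 = 2 * j by omega, show j + (j + 1) = 2 * j + 1 by omega]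
            ring
          refine ⟨2 * (2 * (j : ℤ) + 1) * c * ((2 * j).choose j : ℤ), ?_⟩
          rw [hE]
          push_cast [hcb]
          ring
        · -- a ≥ j + 2 : everything vanishes
          have h1 : j.choose (j + a - j) = 0 := Nat.choose_eq_zero_of_lt (by omega)
          have h2 : j.choose (j + a - j - 1) = 0 := Nat.choose_eq_zero_of_lt (by omega)
          unfold sunAuxE
          rw [h1, h2]
          simp

theorem stmt_1 (n : ℕ) (hn : 0 < n) :
    ∀ j : ℕ, (n : ℤ) ∣
      (∑ k ∈ Finset.range n, Polynomial.C (4 * (k : ℤ) + 3) * sunPoly k).coeff j := by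
  intro j
  have hc : (∑ k ∈ Finset.range n, Polynomial.C (4 * (k : ℤ) + 3) * sunPoly k).coeff j
      = ∑ m ∈ Finset.range (2 * j + 2),
          ((2 * j).choose j : ℤ) * (sunAuxE j m : ℤ) * (n.choose (m + 1) : ℤ) := by
    rw [Polynomial.finset_sum_coeff]
    have h1 : ∀ k ∈ Finset.range n,
        (Polynomial.C (4 * (k : ℤ) + 3) * sunPoly k).coeff j
          = (4 * (k : ℤ) + 3) * ((k.choose j : ℤ) ^ 2 * ((2 * j).choose j : ℤ)) := by
      intro k _
      rw [Polynomial.coeff_C_mul, sunPoly_coeff]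
    rw [Finset.sum_congr rfl h1]
    have h2 : ∑ k ∈ Finset.range n,
        (4 * (k : ℤ) + 3) * ((k.choose j : ℤ) ^ 2 * ((2 * j).choose j : ℤ))
        = ((2 * j).choose j : ℤ) *
            ((∑ k ∈ Finset.range n, (4 * k + 3) * k.choose j ^ 2 : ℕ) : ℤ) := by
      push_cast
      rw [Finset.mul_sum]
      apply Finset.sum_congr rfl
      intro k _
      ring
    rw [h2, star n j]
    push_cast
    rw [Finset.mul_sum]
    apply Finset.sum_congr rfl
    intro m _
    ring
  rw [hc]
  apply Finset.dvd_sum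
  intro m _
  obtain ⟨w, hw⟩ := key j m
  have hnc : ((m : ℤ) + 1) * (n.choose (m + 1) : ℤ) = (n : ℤ) * ((n - 1).choose m : ℤ) := by
    have h := Nat.add_one_mul_choose_eq (n - 1) m
    rw [show n - 1 + 1 = n by omega] at h
    have h' := congrArg (Nat.cast : ℕ → ℤ) h
    push_cast at h'
    linarith [h']
  refine ⟨w * ((n - 1).choose m : ℤ), ?_⟩
  calc ((2 * j).choose j : ℤ) * (sunAuxE j m : ℤ) * (n.choose (m + 1) : ℤ)
      = (((m : ℤ) + 1) * w) * (n.choose (m + 1) : ℤ) := by rw [hw]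
    _ = w * (((m : ℤ) + 1) * (n.choose (m + 1) : ℤ)) := by ring
    _ = w * ((n : ℤ) * ((n - 1).choose m : ℤ)) := by rw [hnc]
    _ = (n : ℤ) * (w * ((n - 1).choose m : ℤ)) := by ring
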